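/- Let (X,d,W) be a W-hyperbolic space, T:X→X uniformly continuous with modulus α_T (i.e., for all x,y∈X and k∈ℕ, d(x,y) ≤ 2^{-α_T(k)} implies d(Tx,Ty) ≤ 2^{-k}), and x∈X with d(x,Tx) ≤ b for some b∈ℕ. Then Ω(n) := n·2^{α_T(0)} + 1 + b is a modulus of majorizability of T at x: for all n∈ℕ and y∈X, d(x,y) ≤ n implies d(x,Ty) ≤ Ω(n). -/

import Mathlib

theorem stmt_4 {X : Type*} [MetricSpace X] (W : X → X → ℝ → X)
    (W1 : ∀ (x y z : X), ∀ l ∈ Set.Icc (0:ℝ) 1,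
      dist z (W x y l) ≤ (1 - l) * dist z x + l * dist z y)
    (W2 : ∀ (x y : X), ∀ l ∈ Set.Icc (0:ℝ) 1, ∀ l' ∈ Set.Icc (0:ℝ) 1,
      dist (W x y l) (W x y l') = |l - l'| * dist x y)
    (W3 : ∀ (x y : X), ∀ l ∈ Set.Icc (0:ℝ) 1, W x y l = W y x (1 - l))
    (W4 : ∀ (x y z w : X), ∀ l ∈ Set.Icc (0:ℝ) 1,
      dist (W x z l) (W y w l) ≤ (1 - l) * dist x y + l * dist z w)
    (T : X → X) (α : ℕ → ℕ)
    (hα : ∀ (x y : X) (k : ℕ), dist x y ≤ (1/2:ℝ)^(α k) → dist (T x) (T y) ≤ (1/2:ℝ)^k)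
    (x : X) (b : ℕ) (hb : dist x (T x) ≤ b) :
    ∀ (n : ℕ) (y : X), dist x y ≤ n → dist x (T y) ≤ n * 2^(α 0) + 1 + b := by
  intro n y hxy
  rcases Nat.eq_zero_or_pos n with hn | hn
  · subst hn
    have h0 : dist x y ≤ 0 := by simpa using hxy
    have hy : y = x := by
      have : dist x y = 0 := le_antisymm h0 dist_nonneg
      exact (dist_eq_zero.mp this).symm
    subst hy
    push_cast
    linarith
  · set N := n * 2 ^ (α 0) with hN
    have hNpos : 0 < N := by positivity
    have hNR : (0:ℝ) < N := by exact_mod_cast hNpos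
    set z : ℕ → X := fun i => W x y ((i : ℝ) / N) with hz
    have hmem : ∀ i : ℕ, i ≤ N → (i : ℝ) / N ∈ Set.Icc (0:ℝ) 1 := by
      intro i hi
      constructor
      · positivity
      · rw [div_le_one hNR]; exact_mod_cast hi
    have hz0 : z 0 = x := by
      have h := W1 x y x 0 ⟨le_refl 0, zero_le_one⟩
      simp at h
      show W x y (((0:ℕ):ℝ) / N) = x
      rw [Nat.cast_zero, zero_div]
      exact h.symm
    have hzN : z N = y := by
      have h := W1 x y y 1 ⟨zero_le_one, le_refl 1⟩
      simp at h
      have h1 : ((N : ℝ) / N) = 1 := div_self (ne_of_gt hNR)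
      show W x y ((N:ℝ) / N) = y
      rw [h1]
      exact h.symm
    have hstep : ∀ i : ℕ, i < N → dist (z i) (z (i+1)) ≤ (1/2:ℝ) ^ (α 0) := by
      intro i hi
      have h2 := W2 x y ((i:ℝ)/N) (hmem i hi.le) (((i:ℝ)+1)/N)
        (by exact_mod_cast hmem (i+1) hi)
      have habs : |(i:ℝ)/N - ((i:ℝ)+1)/N| = 1 / N := by
        rw [div_sub_div_same]
        have : (i:ℝ) - ((i:ℝ)+1) = -1 := by ring
        rw [this, abs_div, abs_neg, abs_one, abs_of_pos hNR]
      have : dist (z i) (z (i+1)) = (1/N) * dist x y := by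
        simp only [hz]
        push_cast
        rw [h2, habs]
      rw [this]
      have h3 : (1/(N:ℝ)) * dist x y ≤ (1/N) * n := by
        apply mul_le_mul_of_nonneg_left hxy (by positivity)
      refine h3.trans ?_
      have hNn : (N:ℝ) = n * 2 ^ (α 0) := by push_cast [hN]; ring
      rw [hNn]
      have hnR : (0:ℝ) < n := by exact_mod_cast hn
      refine le_of_eq ?_
      field_simp
      rw [← mul_pow]; norm_num
    have hTstep : ∀ i : ℕ, i < N → dist (T (z i)) (T (z (i+1))) ≤ 1 := by
      intro i hi
      have := hα (z i) (z (i+1)) 0 (hstep i hi)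
      simpa using this
    have key : ∀ i : ℕ, i ≤ N → dist (T x) (T (z i)) ≤ i := by
      intro i
      induction i with
      | zero => intro _; simp [hz0]
      | succ i ih =>
        intro hi
        have h1 : dist (T x) (T (z (i+1))) ≤ dist (T x) (T (z i)) + dist (T (z i)) (T (z (i+1))) :=
          dist_triangle _ _ _
        have h2 := ih (Nat.le_of_succ_le hi)
        have h3 := hTstep i (Nat.lt_of_succ_le hi)
        push_cast
        linarith
    have hfin : dist x (T y) ≤ dist x (T x) + dist (T x) (T y) := dist_triangle _ _ _
    have hTxy : dist (T x) (T y) ≤ N := by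
      have := key N le_rfl
      rwa [hzN] at this
    have hNcast : (N:ℝ) = n * 2 ^ (α 0) := by push_cast [hN]; ring
    push_cast
    rw [hNcast] at hTxy
    linarith
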